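/- Let d ≥ 3 be an integer and let q > 0 be a real number. Then there exists a unique α ∈ (0, π) satisfying the equation (sin(α/2))^{−(d−1)} · B(cos²(α/2); (d−2)/2, d/2) − B(cos²(α/2); (d−2)/2, 1/2) = √π · Γ(d/2 − 1) / (q · 2^{(d−2)/2} · Γ((d−1)/2)). -/

import Mathlib

open Real MeasureTheory

noncomputable def incBeta (z a b : ℝ) : ℝ := ∫ t in (0:ℝ)..z, t ^ (a - 1) * (1 - t) ^ (b - 1)

namespace IncBetaAux

lemma left_integrable {a : ℝ} (ha : 0 < a) (b : ℝ) :
    IntervalIntegrable (fun t : ℝ => t ^ (a - 1) * (1 - t) ^ (b - 1)) volume 0 (1/2) := by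
  apply IntervalIntegrable.mul_continuousOn
  · exact intervalIntegral.intervalIntegrable_rpow' (by linarith)
  · apply ContinuousOn.rpow_const (by fun_prop)
    intro x hx
    rw [Set.uIcc_of_le (by norm_num : (0:ℝ) ≤ 1/2)] at hx
    left
    have : x ≤ 1/2 := hx.2
    intro h; linarith [sub_eq_zero.mp h]

lemma integrable {a b : ℝ} (ha : 0 < a) (hb : 0 < b) :
    IntervalIntegrable (fun t : ℝ => t ^ (a - 1) * (1 - t) ^ (b - 1)) volume 0 1 := by
  refine (left_integrable ha b).trans ?_
  rw [IntervalIntegrable.iff_comp_neg]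
  convert ((left_integrable hb a).comp_add_right 1).symm using 1
  · ext1 x
    show (-x) ^ (a-1) * (1 - -x) ^ (b-1) = (x+1) ^ (b-1) * (1-(x+1)) ^ (a-1)
    rw [mul_comm]
    congr 2 <;> ring
  · norm_num
  · norm_num

end IncBetaAux

namespace IncBetaAux

lemma integrable' {a b : ℝ} (ha : 0 < a) (hb : 0 < b) {z : ℝ} (hz0 : 0 ≤ z) (hz1 : z ≤ 1) :
    IntervalIntegrable (fun t : ℝ => t ^ (a - 1) * (1 - t) ^ (b - 1)) volume 0 z :=
  (integrable ha hb).mono_set (by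
    rw [Set.uIcc_of_le hz0, Set.uIcc_of_le zero_le_one]
    exact Set.Icc_subset_Icc le_rfl hz1)

lemma incBeta_pos {a b : ℝ} (ha : 0 < a) (hb : 0 < b) {z : ℝ} (hz0 : 0 < z) (hz1 : z ≤ 1) :
    0 < incBeta z a b := by
  refine intervalIntegral.intervalIntegral_pos_of_pos_on (integrable' ha hb hz0.le hz1) ?_ hz0
  intro x hx
  have h1 : 0 < x := hx.1
  have h2 : 0 < 1 - x := by have := hx.2; linarith
  positivity

lemma incBeta_mono {a b : ℝ} (ha : 0 < a) (hb : 0 < b) {z w : ℝ} (hz0 : 0 ≤ z) (hzw : z ≤ w)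
    (hw1 : w ≤ 1) : incBeta z a b ≤ incBeta w a b := by
  have hi1 := integrable' ha hb hz0 (hzw.trans hw1)
  have hi2 : IntervalIntegrable (fun t : ℝ => t ^ (a - 1) * (1 - t) ^ (b - 1)) volume z w :=
    (integrable ha hb).mono_set (by
      rw [Set.uIcc_of_le hzw, Set.uIcc_of_le zero_le_one]
      exact Set.Icc_subset_Icc hz0 hw1)
  have hsplit := intervalIntegral.integral_add_adjacent_intervals hi1 hi2
  have hnn : 0 ≤ ∫ t in z..w, t ^ (a - 1) * (1 - t) ^ (b - 1) := by
    apply intervalIntegral.integral_nonneg hzw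
    intro u hu
    have hu0 : 0 ≤ u := le_trans hz0 hu.1
    have hu1 : u ≤ 1 := le_trans hu.2 hw1
    have : 0 ≤ 1 - u := by linarith
    positivity
  show incBeta z a b ≤ incBeta w a b
  unfold incBeta
  linarith [hsplit]

lemma incBeta_continuousOn {a b : ℝ} (ha : 0 < a) (hb : 0 < b) :
    ContinuousOn (fun z => incBeta z a b) (Set.Icc 0 1) := by
  have h := intervalIntegral.continuousOn_primitive_interval' (μ := volume)
    (integrable ha hb) (Set.left_mem_uIcc (a := (0:ℝ)) (b := 1))
  rwa [Set.uIcc_of_le zero_le_one] at h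

lemma incBeta_hasDerivAt {a b : ℝ} (ha : 0 < a) (hb : 0 < b) {z : ℝ} (hz0 : 0 < z) (hz1 : z < 1) :
    HasDerivAt (fun z => incBeta z a b) (z ^ (a - 1) * (1 - z) ^ (b - 1)) z := by
  have hcont : ContinuousAt (fun t : ℝ => t ^ (a - 1) * (1 - t) ^ (b - 1)) z := by
    apply ContinuousAt.mul
    · exact Real.continuousAt_rpow_const z _ (Or.inl hz0.ne')
    · exact (Real.continuousAt_rpow_const (1 - z) _ (Or.inl (by intro h; rw [sub_eq_zero] at h; linarith))).comp
        (continuous_const.sub continuous_id).continuousAt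
  have hconOn : ContinuousOn (fun t : ℝ => t ^ (a - 1) * (1 - t) ^ (b - 1)) (Set.Ioo 0 1) := by
    apply ContinuousOn.mul
    · exact ContinuousOn.rpow_const continuousOn_id (fun x hx => Or.inl hx.1.ne')
    · exact ContinuousOn.rpow_const (continuous_const.sub continuous_id).continuousOn
        (fun x hx => Or.inl (by have := hx.2; intro h; rw [sub_eq_zero] at h; linarith))
  exact intervalIntegral.integral_hasDerivAt_right (integrable' ha hb hz0.le hz1.le)
    (hconOn.stronglyMeasurableAtFilter isOpen_Ioo z ⟨hz0, hz1⟩) hcont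

end IncBetaAux
set_option maxHeartbeats 1000000 in
theorem support_angle_exists_unique (d : ℕ) (hd : 3 ≤ d) (q : ℝ) (hq : 0 < q) :
    ∃! α : ℝ, α ∈ Set.Ioo 0 π ∧
      Real.sin (α/2) ^ (-((d:ℝ) - 1)) * incBeta (Real.cos (α/2) ^ 2) (((d:ℝ) - 2)/2) ((d:ℝ)/2)
          - incBeta (Real.cos (α/2) ^ 2) (((d:ℝ) - 2)/2) (1/2)
        = Real.sqrt π * Real.Gamma ((d:ℝ)/2 - 1)
            / (q * 2 ^ (((d:ℝ) - 2)/2) * Real.Gamma (((d:ℝ) - 1)/2)) := by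
  have hd3 : (3:ℝ) ≤ (d:ℝ) := by exact_mod_cast hd
  set a : ℝ := ((d:ℝ) - 2)/2 with ha_def
  set b1 : ℝ := (d:ℝ)/2 with hb1_def
  set p : ℝ := -((d:ℝ) - 1) with hp_def
  have ha : 0 < a := by rw [ha_def]; linarith
  have hb1 : 0 < b1 := by rw [hb1_def]; linarith
  have hb2 : 0 < (1/2 : ℝ) := by norm_num
  have hp_neg : p < 0 := by rw [hp_def]; linarith
  set C : ℝ := Real.sqrt π * Real.Gamma ((d:ℝ)/2 - 1)
      / (q * 2 ^ (((d:ℝ) - 2)/2) * Real.Gamma (((d:ℝ) - 1)/2)) with hC_def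
  set f : ℝ → ℝ := fun α =>
    Real.sin (α/2) ^ p * incBeta (Real.cos (α/2) ^ 2) a b1
      - incBeta (Real.cos (α/2) ^ 2) a (1/2) with hf_def
  show ∃! α : ℝ, α ∈ Set.Ioo 0 π ∧ f α = C
  -- positivity of the constant C
  have hC : 0 < C := by
    rw [hC_def]
    apply div_pos
    · exact mul_pos (Real.sqrt_pos.mpr pi_pos) (Real.Gamma_pos_of_pos (by linarith))
    · exact mul_pos (mul_pos hq (Real.rpow_pos_of_pos two_pos _))
        (Real.Gamma_pos_of_pos (by linarith))
  -- basic facts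
  have h_s_pos : ∀ α ∈ Set.Ioc 0 π, 0 < Real.sin (α/2) := by
    intro α hα
    apply Real.sin_pos_of_pos_of_lt_pi (by linarith [hα.1])
    have := hα.2
    linarith [pi_pos]
  have h_cos_sq_mem : ∀ α : ℝ, Real.cos (α/2) ^ 2 ∈ Set.Icc (0:ℝ) 1 := by
    intro α
    refine ⟨sq_nonneg _, ?_⟩
    nlinarith [Real.neg_one_le_cos (α/2), Real.cos_le_one (α/2)]
  -- continuity of f on (0, π]
  have hcont : ContinuousOn f (Set.Ioc 0 π) := by
    rw [hf_def]
    have hcos2 : Continuous (fun α : ℝ => Real.cos (α/2) ^ 2) :=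
      (Real.continuous_cos.comp (continuous_id.div_const 2)).pow 2
    have hIB : ∀ b : ℝ, 0 < b →
        ContinuousOn (fun α => incBeta (Real.cos (α/2) ^ 2) a b) (Set.Ioc 0 π) := by
      intro b hb
      exact (IncBetaAux.incBeta_continuousOn ha hb).comp hcos2.continuousOn
        (fun α _ => h_cos_sq_mem α)
    apply ContinuousOn.sub _ (hIB _ hb2)
    apply ContinuousOn.mul _ (hIB _ hb1)
    apply ContinuousOn.rpow_const
      (Real.continuous_sin.comp (continuous_id.div_const 2)).continuousOn
    exact fun α hα => Or.inl (h_s_pos α hα).ne'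
  -- strict antitonicity on (0, π]
  have hanti : StrictAntiOn f (Set.Ioc 0 π) := by
    apply strictAntiOn_of_deriv_neg (convex_Ioc 0 π) hcont
    rw [interior_Ioc]
    intro α hα
    set s := Real.sin (α/2) with hs_def
    set c := Real.cos (α/2) with hc_def
    have hs : 0 < s := h_s_pos α ⟨hα.1, hα.2.le⟩
    have hc : 0 < c := Real.cos_pos_of_mem_Ioo ⟨by linarith [hα.1, pi_pos], by linarith [hα.2]⟩
    have hpyth : s^2 + c^2 = 1 := Real.sin_sq_add_cos_sq (α/2)
    have hz0 : 0 < c^2 := pow_pos hc 2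
    have hz1 : c^2 < 1 := by nlinarith
    have hu : HasDerivAt (fun α : ℝ => α/2) (1/2) α := (hasDerivAt_id α).div_const 2
    have hsin : HasDerivAt (fun α : ℝ => Real.sin (α/2)) (c * (1/2)) α :=
      (Real.hasDerivAt_sin (α/2)).comp (h := fun α : ℝ => α/2) α hu
    have hcos : HasDerivAt (fun α : ℝ => Real.cos (α/2)) (-s * (1/2)) α :=
      (Real.hasDerivAt_cos (α/2)).comp (h := fun α : ℝ => α/2) α hu
    have hzd : HasDerivAt (fun α : ℝ => Real.cos (α/2) ^ 2)
        ((2:ℕ) * c ^ 1 * (-s * (1/2))) α := hcos.pow 2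
    have hB1d : HasDerivAt (fun α : ℝ => incBeta (Real.cos (α/2) ^ 2) a b1)
        ((c^2) ^ (a-1) * (1 - c^2) ^ (b1-1) * ((2:ℕ) * c ^ 1 * (-s * (1/2)))) α :=
      (IncBetaAux.incBeta_hasDerivAt ha hb1 hz0 hz1).comp (h := fun α : ℝ => Real.cos (α/2) ^ 2) α hzd
    have hB2d : HasDerivAt (fun α : ℝ => incBeta (Real.cos (α/2) ^ 2) a (1/2))
        ((c^2) ^ (a-1) * (1 - c^2) ^ ((1:ℝ)/2-1) * ((2:ℕ) * c ^ 1 * (-s * (1/2)))) α :=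
      (IncBetaAux.incBeta_hasDerivAt ha hb2 hz0 hz1).comp (h := fun α : ℝ => Real.cos (α/2) ^ 2) α hzd
    have hpow : HasDerivAt (fun α : ℝ => Real.sin (α/2) ^ p) (p * s ^ (p-1) * (c * (1/2))) α :=
      (Real.hasDerivAt_rpow_const (Or.inl hs.ne')).comp (h := fun α : ℝ => Real.sin (α/2)) α hsin
    have hf' : HasDerivAt f
        ((p * s ^ (p-1) * (c * (1/2))) * incBeta (c^2) a b1
          + s ^ p * ((c^2) ^ (a-1) * (1 - c^2) ^ (b1-1) * ((2:ℕ) * c ^ 1 * (-s * (1/2))))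
          - (c^2) ^ (a-1) * (1 - c^2) ^ ((1:ℝ)/2-1) * ((2:ℕ) * c ^ 1 * (-s * (1/2)))) α := by
      rw [hf_def]
      exact (hpow.mul hB1d).sub hB2d
    rw [hf'.deriv]
    -- now show the derivative is negative
    have hsq : (1 - c^2) = s^2 := by linarith
    have hspow : ∀ y : ℝ, ((s:ℝ)^2) ^ y = s ^ (2*y) := by
      intro y
      rw [← Real.rpow_natCast s 2, ← Real.rpow_mul hs.le]
      norm_num
    have hs1 : s ^ p * s ^ (2*(b1-1)) * s = 1 := by
      rw [← Real.rpow_add hs, ← Real.rpow_add_one hs.ne',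
        show p + 2*(b1-1) + 1 = 0 by rw [hp_def, hb1_def]; ring, Real.rpow_zero]
    have hs2 : s ^ (2*((1:ℝ)/2-1)) * s = 1 := by
      rw [← Real.rpow_add_one hs.ne', show 2*((1:ℝ)/2-1) + 1 = 0 by ring, Real.rpow_zero]
    have hcancel : s ^ p * ((c^2) ^ (a-1) * (1 - c^2) ^ (b1-1) * ((2:ℕ) * c ^ 1 * (-s * (1/2))))
          - (c^2) ^ (a-1) * (1 - c^2) ^ ((1:ℝ)/2-1) * ((2:ℕ) * c ^ 1 * (-s * (1/2))) = 0 := by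
      rw [hsq, hspow, hspow]
      have hre : s ^ p * ((c^2) ^ (a-1) * s ^ (2*(b1-1)) * ((2:ℕ) * c ^ 1 * (-s * (1/2))))
            - (c^2) ^ (a-1) * s ^ (2*((1:ℝ)/2-1)) * ((2:ℕ) * c ^ 1 * (-s * (1/2)))
          = (s ^ (2*((1:ℝ)/2-1)) * s - s ^ p * s ^ (2*(b1-1)) * s) * ((c^2) ^ (a-1) * c) := by
        push_cast
        ring
      rw [hre, hs1, hs2, sub_self, zero_mul]
    have hBpos : 0 < incBeta (c^2) a b1 := IncBetaAux.incBeta_pos ha hb1 hz0 hz1.le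
    have hterm : (p * s ^ (p-1) * (c * (1/2))) * incBeta (c^2) a b1 < 0 := by
      apply mul_neg_of_neg_of_pos _ hBpos
      apply mul_neg_of_neg_of_pos _ (by positivity)
      exact mul_neg_of_neg_of_pos hp_neg (Real.rpow_pos_of_pos hs _)
    linarith [hcancel, hterm]
  -- value at π
  have hfπ : f π = 0 := by
    rw [hf_def]
    simp [Real.cos_pi_div_two, Real.sin_pi_div_two, incBeta, intervalIntegral.integral_same]
  -- choose α₁ with f α₁ > C
  set c₀ : ℝ := incBeta (1/2) a b1 with hc0_def
  have hc₀ : 0 < c₀ := IncBetaAux.incBeta_pos ha hb1 (by norm_num) (by norm_num)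
  set B1h : ℝ := incBeta 1 a (1/2) with hB1h_def
  set M : ℝ := max ((C + B1h)/c₀) 0 + 1 with hM_def
  have hM : 0 < M := by
    have := le_max_right ((C + B1h)/c₀) (0:ℝ)
    rw [hM_def]; linarith
  have hMgt : (C + B1h)/c₀ < M := by
    have := le_max_left ((C + B1h)/c₀) (0:ℝ)
    rw [hM_def]; linarith
  set t : ℝ := M ^ (-(1/((d:ℝ)-1))) with ht_def
  have ht : 0 < t := Real.rpow_pos_of_pos hM _
  set α₁ : ℝ := min t (π/2) with hα₁_def
  have hα₁pos : 0 < α₁ := lt_min ht (by positivity)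
  have hα₁le : α₁ ≤ π/2 := min_le_right _ _
  have hα₁mem : α₁ ∈ Set.Ioc 0 π := ⟨hα₁pos, by linarith [pi_pos]⟩
  have hs₁ : 0 < Real.sin (α₁/2) := h_s_pos α₁ hα₁mem
  have hs₁le : Real.sin (α₁/2) ≤ t := by
    have h1 : Real.sin (α₁/2) ≤ α₁/2 := Real.sin_le (by linarith)
    have h2 : α₁ ≤ t := min_le_left _ _
    linarith
  have hd1ne : (d:ℝ) - 1 ≠ 0 := by intro h; linarith [h]
  have htp : t ^ p = M := by
    rw [ht_def, ← Real.rpow_mul hM.le,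
      show (-(1/((d:ℝ)-1))) * p = 1 by rw [hp_def]; field_simp, Real.rpow_one]
  have hsp : M ≤ Real.sin (α₁/2) ^ p := by
    rw [← htp]
    exact Real.rpow_le_rpow_of_nonpos hs₁ hs₁le hp_neg.le
  have hcoshalf : (1:ℝ)/2 ≤ Real.cos (α₁/2)^2 := by
    have h1 : Real.cos (π/4) ≤ Real.cos (α₁/2) := by
      apply Real.cos_le_cos_of_nonneg_of_le_pi (by linarith) (by linarith [pi_pos])
      linarith
    have hnn : (0:ℝ) ≤ Real.cos (π/4) := by
      rw [Real.cos_pi_div_four]; positivity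
    have h2 : Real.cos (π/4)^2 ≤ Real.cos (α₁/2)^2 := by nlinarith
    have h3 : Real.cos (π/4)^2 = 1/2 := by
      rw [Real.cos_pi_div_four, div_pow, Real.sq_sqrt (by norm_num : (0:ℝ) ≤ 2)]
      norm_num
    linarith
  have hflow : C < f α₁ := by
    have hge1 : c₀ ≤ incBeta (Real.cos (α₁/2)^2) a b1 :=
      IncBetaAux.incBeta_mono ha hb1 (by norm_num) hcoshalf (h_cos_sq_mem α₁).2
    have hge2 : incBeta (Real.cos (α₁/2)^2) a (1/2) ≤ B1h :=
      IncBetaAux.incBeta_mono ha hb2 (h_cos_sq_mem α₁).1 (h_cos_sq_mem α₁).2 le_rfl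
    have hprod : M * c₀ ≤ Real.sin (α₁/2) ^ p * incBeta (Real.cos (α₁/2)^2) a b1 :=
      mul_le_mul hsp hge1 hc₀.le (Real.rpow_pos_of_pos hs₁ p).le
    have hMC : C + B1h < M * c₀ := by
      have := (div_lt_iff₀ hc₀).mp hMgt
      linarith
    show C < Real.sin (α₁/2) ^ p * incBeta (Real.cos (α₁/2) ^ 2) a b1
        - incBeta (Real.cos (α₁/2) ^ 2) a (1/2)
    have h5 : C < M * c₀ - B1h := by linarith
    exact lt_of_lt_of_le h5 (sub_le_sub hprod hge2)
  -- intermediate value theorem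
  have hsub : Set.Icc α₁ π ⊆ Set.Ioc 0 π := fun x hx => ⟨lt_of_lt_of_le hα₁pos hx.1, hx.2⟩
  have hα₁π : α₁ ≤ π := by linarith [pi_pos]
  have hC_mem : C ∈ Set.Icc (f π) (f α₁) := by rw [hfπ]; exact ⟨hC.le, hflow.le⟩
  obtain ⟨α, hαmem, hfα⟩ := intermediate_value_Icc' hα₁π (hcont.mono hsub) hC_mem
  have hαIoc : α ∈ Set.Ioc 0 π := hsub hαmem
  have hαlt : α < π := by
    rcases lt_or_eq_of_le hαmem.2 with h | h
    · exact h
    · exfalso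
      rw [h, hfπ] at hfα
      exact hC.ne' hfα.symm
  refine ⟨α, ⟨⟨hαIoc.1, hαlt⟩, hfα⟩, ?_⟩
  rintro β ⟨hβmem, hfβ⟩
  exact hanti.injOn ⟨hβmem.1, hβmem.2.le⟩ ⟨hαIoc.1, hαIoc.2⟩ (hfβ.trans hfα.symm)
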